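/- The sets S_i are uniquely characterized by their recursion: if (T_i)_{i∈I} is any family of subsets of ℝ^n satisfying T_i = {x_i} ∪ ⋃_{j∈I} ⋃_{m∈E_{ji}} [x_i, T_j + m] for all i ∈ I (with [x, S] = {t·x + (1−t)·y : y ∈ S, t ∈ [0,1]}), then T_i = S_i for all i ∈ I. -/

import Mathlib

open scoped BigOperators
open MeasureTheory

noncomputable section

/-- `ℤ^n`, the exponent lattice. -/
abbrev Zn (n : ℕ) : Type := Fin n → ℤ

/-- `ℝ^n`. -/
abbrev Rn (n : ℕ) : Type := Fin n → ℝ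

/-- The Laurent polynomial ring `R_n = ℂ[z_1^{±1},…,z_n^{±1}]`, realized as the group
algebra of `ℤ^n` over `ℂ`. -/
abbrev LaurentRing (n : ℕ) : Type := AddMonoidAlgebra ℂ (Zn n)

/-- The embedding `ℤ^n → ℝ^n`. -/
def zToR {n : ℕ} (m : Zn n) : Rn n := fun j => (m j : ℝ)

/-- A bounded based sequence `F^•` of finite-rank free `R_n`-modules: a finite index set
`I = ⊔_k I_k` (with `I_k = ∅` for `k > 0` and `I_0 ≠ ∅`), recorded via a degree function,
together with the matrix entries `d^k_{ij} ∈ R_n` of the maps `F^k → F^{k+1}`. -/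
structure BasedSeq (n : ℕ) where
  I : Type
  fintypeI : Fintype I
  deg : I → ℤ
  deg_nonpos : ∀ i, deg i ≤ 0
  exists_deg_zero : ∃ i, deg i = 0
  d : I → I → LaurentRing n
  d_eq_zero : ∀ i j, deg i ≠ deg j + 1 → d i j = 0

attribute [instance] BasedSeq.fintypeI

/-- Chains witnessing membership in `E_{ij}`: `EChain F i j m` holds iff there is a chain
`j = i_0, i_1, …, i_k = i` with `deg i_ℓ = deg i_{ℓ-1} + 1` at each step, exponents
`m_ℓ` in the support of the corresponding matrix entry, and `m = m_1 + ⋯ + m_k`. -/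
inductive EChain {n : ℕ} (F : BasedSeq n) : F.I → F.I → Zn n → Prop where
  | base {i j : F.I} {m : Zn n} :
      F.deg i = F.deg j + 1 → m ∈ (F.d i j).coeff.support → EChain F i j m
  | step {i j k : F.I} {m m' : Zn n} :
      EChain F j k m → F.deg i = F.deg j + 1 → m' ∈ (F.d i j).coeff.support →
      EChain F i k (m + m')

/-- The subset `E_{ij} ⊆ ℤ^n`. -/
def Eset {n : ℕ} (F : BasedSeq n) (i j : F.I) : Set (Zn n) := {m | EChain F i j m}

/-- The condition `(m_1, …, m_k) ∈ E_{i_1 i_0} × ⋯ × E_{i_k i_{k-1}}`. -/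
def goodTuple {n : ℕ} (F : BasedSeq n) {k : ℕ} (c : Fin (k + 1) → F.I)
    (m : Fin k → Zn n) : Prop :=
  ∀ ℓ : Fin k, m ℓ ∈ Eset F (c ℓ.succ) (c ℓ.castSucc)

/-- The vertex tuple `(x_{i_0}, x_{i_1}+m_1, …, x_{i_k}+m_1+⋯+m_k)` in `ℝ^n`. -/
def vtx {n : ℕ} (F : BasedSeq n) (x : F.I → Rn n) {k : ℕ}
    (c : Fin (k + 1) → F.I) (m : Fin k → Zn n) : Fin (k + 1) → Rn n :=
  fun a => x (c a) + zToR (∑ ℓ ∈ Finset.univ.filter (fun ℓ : Fin k => (ℓ : ℕ) < (a : ℕ)), m ℓ)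

/-- Membership in `X(F^•)_k`: the tuple `y` represents (mod a common `ℤ^n`-translation `t`)
one of the linear `k`-simplices `[x_{i_0}, x_{i_1}+m_1, …, x_{i_k}+m_1+⋯+m_k] mod ℤ^n`. -/
def InX {n : ℕ} (F : BasedSeq n) (x : F.I → Rn n) (k : ℕ)
    (y : Fin (k + 1) → Rn n) : Prop :=
  ∃ (c : Fin (k + 1) → F.I) (m : Fin k → Zn n) (t : Zn n),
    goodTuple F c m ∧ ∀ a, y a = vtx F x c m a + zToR t

/-- The integer lattice `ℤ^n ⊆ ℝ^n` as an additive subgroup. -/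
def intLattice (n : ℕ) : AddSubgroup (Rn n) :=
  AddSubgroup.pi Set.univ fun _ => AddSubgroup.zmultiples (1 : ℝ)

/-- The torus `T^n = ℝ^n/ℤ^n`. -/
abbrev Torus (n : ℕ) := Rn n ⧸ intLattice n

/-- The projection `π : ℝ^n → T^n`. -/
def toTorus {n : ℕ} : Rn n → Torus n := QuotientAddGroup.mk

/-- The tropical Lagrangian coamoeba `T(F^•) ⊆ T^n`. -/
def TropT {n : ℕ} (F : BasedSeq n) (x : F.I → Rn n) : Set (Torus n) :=
  ⋃ (k : ℕ), ⋃ (c : Fin (k + 1) → F.I), ⋃ (m : Fin k → Zn n), ⋃ (_ : goodTuple F c m),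
    toTorus '' convexHull ℝ (Set.range (vtx F x c m))

/-- The subset `S_i ⊆ ℝ^n`. -/
def Sset {n : ℕ} (F : BasedSeq n) (x : F.I → Rn n) (i : F.I) : Set (Rn n) :=
  ⋃ (k : ℕ), ⋃ (c : Fin (k + 1) → F.I), ⋃ (m : Fin k → Zn n),
    ⋃ (_ : c 0 = i ∧ goodTuple F c m), convexHull ℝ (Set.range (vtx F x c m))

/-- `[x, S] = {t·x + (1−t)·y : y ∈ S, t ∈ [0,1]}`. -/
def joinSet {n : ℕ} (x : Rn n) (S : Set (Rn n)) : Set (Rn n) :=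
  {p | ∃ y ∈ S, ∃ t ∈ Set.Icc (0 : ℝ) 1, p = t • x + (1 - t) • y}


open scoped Pointwise

lemma zToR_zero {n : ℕ} : zToR (0 : Zn n) = 0 := by
  funext j; simp [zToR]

lemma zToR_add {n : ℕ} (a b : Zn n) : zToR (a + b) = zToR a + zToR b := by
  funext j; simp [zToR]

lemma joinSet_eq_convexJoin {n : ℕ} (x : Rn n) (S : Set (Rn n)) :
    joinSet x S = convexJoin ℝ {x} S := by
  ext p
  simp only [joinSet, convexJoin, Set.mem_setOf_eq, Set.mem_iUnion, Set.mem_singleton_iff]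
  constructor
  · rintro ⟨y, hy, t, ⟨ht0, ht1⟩, rfl⟩
    exact ⟨x, rfl, y, hy, t, 1 - t, ht0, by linarith, by ring, rfl⟩
  · rintro ⟨x', rfl, y, hy, a, b, ha, hb, hab, rfl⟩
    exact ⟨y, hy, a, ⟨ha, by linarith⟩, by rw [show b = 1 - a by linarith]⟩

lemma convexHull_translate {n : ℕ} (v : Rn n) (s : Set (Rn n)) :
    convexHull ℝ ((fun y => y + v) '' s) = (fun y => y + v) '' convexHull ℝ s := by
  have h1 : (fun y : Rn n => y + v) '' s = s + ({v} : Set (Rn n)) := by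
    rw [Set.add_singleton]
  have h2 : (fun y : Rn n => y + v) '' convexHull ℝ s
      = convexHull ℝ s + ({v} : Set (Rn n)) := by
    rw [Set.add_singleton]
  rw [h1, h2, convexHull_add, convexHull_singleton]

lemma vtx_zero {n : ℕ} (F : BasedSeq n) (x : F.I → Rn n) {k : ℕ}
    (c : Fin (k + 1) → F.I) (m : Fin k → Zn n) : vtx F x c m 0 = x (c 0) := by
  have : (Finset.univ.filter (fun ℓ : Fin k => (ℓ : ℕ) < ((0 : Fin (k+1)) : ℕ))) = ∅ := by
    simp
  simp [vtx, this, zToR_zero]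

lemma vtx_succ {n : ℕ} (F : BasedSeq n) (x : F.I → Rn n) {k : ℕ}
    (c : Fin (k + 2) → F.I) (m : Fin (k + 1) → Zn n) (a : Fin (k + 1)) :
    vtx F x c m a.succ = vtx F x (Fin.tail c) (Fin.tail m) a + zToR (m 0) := by
  simp only [vtx, Fin.tail]
  have hsum : (∑ ℓ ∈ Finset.univ.filter (fun ℓ : Fin (k+1) => (ℓ : ℕ) < (a.succ : ℕ)), m ℓ)
      = (∑ ℓ ∈ Finset.univ.filter (fun ℓ : Fin k => (ℓ : ℕ) < (a : ℕ)), m ℓ.succ) + m 0 := by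
    rw [Finset.sum_filter, Finset.sum_filter, Fin.sum_univ_succ]
    simp only [Fin.val_zero, Fin.val_succ, Nat.succ_lt_succ_iff]
    simp only [show (0:ℕ) < (a:ℕ) + 1 from Nat.succ_pos _, if_true]
    abel
  rw [hsum, zToR_add]
  abel

lemma tail_goodTuple {n : ℕ} (F : BasedSeq n) {k : ℕ}
    (c : Fin (k + 2) → F.I) (m : Fin (k + 1) → Zn n) (h : goodTuple F c m) :
    goodTuple F (Fin.tail c) (Fin.tail m) := by
  intro ℓ
  have := h ℓ.succ
  simpa only [Fin.tail, Fin.succ_castSucc] using this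

lemma cons_goodTuple {n : ℕ} (F : BasedSeq n) {k : ℕ}
    (i : F.I) (c : Fin (k + 1) → F.I) (m : Fin k → Zn n) (m0 : Zn n)
    (h : goodTuple F c m) (h0 : m0 ∈ Eset F (c 0) i) :
    goodTuple F (Fin.cons i c) (Fin.cons m0 m) := by
  intro ℓ
  induction ℓ using Fin.cases with
  | zero =>
    simp only [Fin.cons_zero, Fin.cons_succ, Fin.castSucc_zero]
    exact h0
  | succ b =>
    have := h b
    simpa [← Fin.succ_castSucc] using this

/-- convex hull of the simplex of a chain lies in `Sset` of its head. -/
lemma hull_subset_Sset {n : ℕ} (F : BasedSeq n) (x : F.I → Rn n) {k : ℕ}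
    (c : Fin (k + 1) → F.I) (m : Fin k → Zn n) (h : goodTuple F c m) :
    convexHull ℝ (Set.range (vtx F x c m)) ⊆ Sset F x (c 0) := by
  intro p hp
  exact Set.mem_iUnion.2 ⟨k, Set.mem_iUnion.2 ⟨c, Set.mem_iUnion.2 ⟨m,
    Set.mem_iUnion.2 ⟨⟨rfl, h⟩, hp⟩⟩⟩⟩

/-- The recursion satisfied by the sets `S_i`. -/
lemma Sset_rec {n : ℕ} (F : BasedSeq n) (x : F.I → Rn n) (i : F.I) :
    Sset F x i = {x i} ∪ ⋃ (j : F.I), ⋃ m ∈ Eset F j i,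
      joinSet (x i) ((fun y => y + zToR m) '' Sset F x j) := by
  apply Set.Subset.antisymm
  · intro p hp
    simp only [Sset, Set.mem_iUnion] at hp
    obtain ⟨k, c, m, ⟨hc0, hgood⟩, hp⟩ := hp
    subst hc0
    cases k with
    | zero =>
      left
      have hr : Set.range (vtx F x c m) ⊆ {x (c 0)} := by
        rintro _ ⟨a, rfl⟩
        have ha : a = 0 := Fin.ext (Nat.lt_one_iff.1 a.isLt)
        rw [ha, vtx_zero]; rfl
      have := convexHull_mono hr hp
      rwa [convexHull_singleton] at this
    | succ k =>
      right
      have hrange : Set.range (vtx F x c m)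
          = insert (vtx F x c m 0) (Set.range (Fin.tail (vtx F x c m))) :=
        Fin.range_fin_succ _
      have htail : Set.range (Fin.tail (vtx F x c m))
          = (fun y => y + zToR (m 0)) '' Set.range (vtx F x (Fin.tail c) (Fin.tail m)) := by
        rw [← Set.range_comp]
        exact congrArg Set.range (funext fun a => vtx_succ F x c m a)
      rw [hrange, vtx_zero] at hp
      rw [convexHull_insert (by rw [htail]; exact (Set.range_nonempty _).image _)] at hp
      rw [htail, convexHull_translate] at hp
      refine Set.mem_iUnion.2 ⟨c 1, Set.mem_iUnion.2 ⟨m 0, Set.mem_iUnion.2 ⟨?_, ?_⟩⟩⟩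
      · have := hgood 0
        simpa using this
      · rw [joinSet_eq_convexJoin]
        refine convexJoin_mono_right ?_ hp
        apply Set.image_mono
        have := hull_subset_Sset F x (Fin.tail c) (Fin.tail m) (tail_goodTuple F c m hgood)
        simpa [Fin.tail] using this
  · rintro p (hp | hp)
    · simp only [Set.mem_singleton_iff] at hp
      subst hp
      refine Set.mem_iUnion.2 ⟨0, Set.mem_iUnion.2 ⟨fun _ => i, Set.mem_iUnion.2
        ⟨Fin.elim0, Set.mem_iUnion.2 ⟨⟨rfl, fun ℓ => ℓ.elim0⟩, ?_⟩⟩⟩⟩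
      refine subset_convexHull ℝ _ ⟨0, ?_⟩
      rw [vtx_zero]
    · simp only [Set.mem_iUnion] at hp
      obtain ⟨j, m0, hm0, hp⟩ := hp
      obtain ⟨y', ⟨y, hy, rfl⟩, t, ⟨ht0, ht1⟩, rfl⟩ := hp
      simp only [Sset, Set.mem_iUnion] at hy
      obtain ⟨k, c, mm, ⟨hc0, hgood⟩, hy⟩ := hy
      subst hc0
      have hgood' : goodTuple F (Fin.cons i c) (Fin.cons m0 mm) :=
        cons_goodTuple F i c mm m0 hgood hm0
      have hhead : vtx F x (Fin.cons i c) (Fin.cons m0 mm) 0 = x i := by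
        rw [vtx_zero]; simp
      have htail : ∀ a, vtx F x (Fin.cons i c) (Fin.cons m0 mm) a.succ
          = vtx F x c mm a + zToR m0 := by
        intro a
        rw [vtx_succ]
        simp [Fin.tail]
      refine Set.mem_iUnion.2 ⟨k + 1, Set.mem_iUnion.2 ⟨Fin.cons i c, Set.mem_iUnion.2
        ⟨Fin.cons m0 mm, Set.mem_iUnion.2 ⟨⟨rfl, hgood'⟩, ?_⟩⟩⟩⟩
      have hx : x i ∈ convexHull ℝ (Set.range (vtx F x (Fin.cons i c) (Fin.cons m0 mm))) :=
        subset_convexHull ℝ _ ⟨0, hhead⟩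
      have hy2 : y + zToR m0
          ∈ convexHull ℝ (Set.range (vtx F x (Fin.cons i c) (Fin.cons m0 mm))) := by
        have hsub : Set.range (vtx F x c mm) ⊆
            (fun z => z - zToR m0) '' Set.range (vtx F x (Fin.cons i c) (Fin.cons m0 mm)) := by
          rintro _ ⟨a, rfl⟩
          exact ⟨vtx F x (Fin.cons i c) (Fin.cons m0 mm) a.succ, ⟨a.succ, rfl⟩,
            by show vtx F x (Fin.cons i c) (Fin.cons m0 mm) a.succ - zToR m0 = vtx F x c mm a
               rw [htail a, add_sub_cancel_right]⟩
        have : y ∈ convexHull ℝ ((fun z => z + (-zToR m0)) ''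
            Set.range (vtx F x (Fin.cons i c) (Fin.cons m0 mm))) :=
          convexHull_mono (by simpa [sub_eq_add_neg] using hsub) hy
        rw [convexHull_translate] at this
        obtain ⟨z, hz, hz2⟩ := this
        have hz3 : z = y + zToR m0 := by
          rw [← hz2]
          show z = z + -zToR m0 + zToR m0
          rw [neg_add_cancel_right]
        rwa [← hz3]
      exact convex_convexHull ℝ _ hx hy2 ht0 (by linarith) (by ring)

lemma EChain_deg_lt {n : ℕ} {F : BasedSeq n} {j i : F.I} {m : Zn n}
    (h : EChain F j i m) : F.deg i < F.deg j := by
  induction h with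
  | base hd _ => omega
  | step _ hd _ ih => omega

/-- the sets `S_i` are uniquely characterized by their recursion. -/
theorem stmt9 (n : ℕ) (hn : 1 ≤ n) (F : BasedSeq n) (x : F.I → Rn n)
    (T : F.I → Set (Rn n))
    (hT : ∀ i : F.I, T i = {x i} ∪ ⋃ (j : F.I), ⋃ m ∈ Eset F j i,
      joinSet (x i) ((fun y => y + zToR m) '' T j)) :
    ∀ i : F.I, T i = Sset F x i := by
  suffices H : ∀ N : ℕ, ∀ i : F.I, (-F.deg i).toNat < N → T i = Sset F x i by
    intro i; exact H ((-F.deg i).toNat + 1) i (Nat.lt_succ_self _)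
  intro N
  induction N with
  | zero => intro i h; omega
  | succ N ih =>
    intro i hi
    rw [hT i, Sset_rec F x i]
    congr 1
    apply Set.iUnion_congr
    intro j
    apply Set.iUnion_congr
    intro m
    apply Set.iUnion_congr
    intro hm
    have hdeg : F.deg i < F.deg j := EChain_deg_lt hm
    have hjN : (-F.deg j).toNat < N := by
      have h0 : F.deg j ≤ 0 := F.deg_nonpos j
      have h1 : F.deg i ≤ 0 := F.deg_nonpos i
      omega
    rw [ih j hjN]

end
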